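/- Let X be a finitely supported subset of an invariant set such that X contains no infinite uniformly supported subset. Then the finite powerset ℘_fin(X) of X contains no infinite uniformly supported subset. -/

import Mathlib

open Pointwise

/-- The group of finitary permutations of the set `A` of atoms:
bijections of `A` that move only finitely many atoms. -/
def finPerm (A : Type*) : Subgroup (Equiv.Perm A) where
  carrier := {π | {a | π a ≠ a}.Finite}
  one_mem' := by simp
  mul_mem' := by
    intro π σ hπ hσ
    apply Set.Finite.subset (hπ.union hσ)
    intro a ha
    by_contra hc
    simp only [Set.mem_union, Set.mem_setOf_eq, not_or, not_not] at hc
    exact ha (by simp [Equiv.Perm.mul_apply, hc.1, hc.2])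
  inv_mem' := by
    intro π hπ
    apply Set.Finite.subset hπ
    intro a ha
    simp only [Set.mem_setOf_eq] at ha ⊢
    intro h
    exact ha (Equiv.Perm.inv_eq_iff_eq.mpr h.symm)

/-- `x` is finitely supported: some finite set of atoms supports it. -/
def FinitelySupported (A : Type*) {X : Type*} [MulAction (finPerm A) X] (x : X) : Prop :=
  ∃ S : Set A, S.Finite ∧ MulAction.Supports (finPerm A) S x

/-- A subset `Z` of an `S_A`-set is uniformly supported if a single finite set
of atoms supports every element of `Z`. -/
def UniformlySupported (A : Type*) {X : Type*} [MulAction (finPerm A) X] (Z : Set X) : Prop :=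
  ∃ S : Set A, S.Finite ∧ ∀ x ∈ Z, MulAction.Supports (finPerm A) S x

/-- The least support of `x`: the intersection of all finite sets of atoms supporting `x`. -/
noncomputable def supp (A : Type*) {X : Type*} [MulAction (finPerm A) X] (x : X) : Set A :=
  ⋂₀ {S : Set A | S.Finite ∧ MulAction.Supports (finPerm A) S x}

/-- `Z` contains no infinite uniformly supported subset
(`Z` is "FSM non-uniformly infinite"). -/
def NoInfUS (A : Type*) {X : Type*} [MulAction (finPerm A) X] (Z : Set X) : Prop :=
  ∀ W ⊆ Z, UniformlySupported A W → W.Finite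

/-- The uniform powerset `℘_us(X)`: all uniformly supported subsets of `X`. -/
def usPowerset (A : Type*) {X : Type*} [MulAction (finPerm A) X] (Z : Set X) : Set (Set X) :=
  {W | W ⊆ Z ∧ UniformlySupported A W}

/-- The finite powerset `℘_fin(X)`: all finite subsets of `X`. -/
def finPowerset {X : Type*} (Z : Set X) : Set (Set X) :=
  {W | W ⊆ Z ∧ W.Finite}

/-- `S` supports the function `f` on the domain `X` (Proposition 2.18'(2)):
for every `π` fixing `S` pointwise and every `x ∈ X`, `π • x ∈ X` and
`f (π • x) = π • f x`. -/
def FnSupportsOn (A : Type*) {Y : Type*} [MulAction (finPerm A) Y]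
    (X : Set Y) (S : Set A) (f : Y → Y) : Prop :=
  ∀ π : finPerm A, (∀ a ∈ S, π • a = a) → ∀ x ∈ X, π • x ∈ X ∧ f (π • x) = π • f x

/-- The least support of a function `f` with domain `X`. -/
noncomputable def fnSupp (A : Type*) {Y : Type*} [MulAction (finPerm A) Y]
    (X : Set Y) (f : Y → Y) : Set A :=
  ⋂₀ {S : Set A | S.Finite ∧ FnSupportsOn A X S f}


section Aux
variable {A : Type*}
attribute [local instance] Classical.decEq

open Classical in
/-- swap as an element of finPerm -/
noncomputable def swapP (a b : A) : finPerm A :=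
  ⟨Equiv.swap a b, Set.Finite.subset ((Set.finite_singleton b).insert a) (by
    intro c hc
    simp only [Set.mem_setOf_eq] at hc
    by_contra hc'
    simp only [Set.mem_insert_iff, Set.mem_singleton_iff, not_or] at hc'
    exact hc (Equiv.swap_apply_of_ne_of_ne hc'.1 hc'.2))⟩

lemma swapP_atom (a b c : A) : swapP a b • c = Equiv.swap a b c := rfl

lemma swapP_mul_self (a b : A) : swapP a b * swapP a b = 1 :=
  Subtype.ext (Equiv.swap_mul_self a b)

lemma swap_identity1 {a b b' : A} (hab : a ≠ b) (hab' : a ≠ b') (hbb' : b ≠ b') :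
    swapP b b' * (swapP a b' * swapP a b) = swapP a b' := by
  apply Subtype.ext
  show Equiv.swap b b' * (Equiv.swap a b' * Equiv.swap a b) = Equiv.swap a b'
  ext c
  simp only [Equiv.Perm.mul_apply, Equiv.swap_apply_def]
  split_ifs <;> simp_all

lemma swap_conj {a b c : A} (hab : a ≠ b) (hac : a ≠ c) (hbc : b ≠ c) :
    swapP b c * swapP a b * swapP b c = swapP a c := by
  apply Subtype.ext
  show Equiv.swap b c * Equiv.swap a b * Equiv.swap b c = Equiv.swap a c
  ext d
  simp only [Equiv.Perm.mul_apply, Equiv.swap_apply_def]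
  split_ifs <;> simp_all

/-- If `x` is finitely supported and its orbit under the stabilizer of `S`
is contained in a finite set, then `S` supports `x`. -/
lemma key {Y : Type*} [Infinite A] [MulAction (finPerm A) Y]
    (S : Set A) (hS : S.Finite) (F : Set Y) (hF : F.Finite) (x : Y)
    (horb : ∀ π : finPerm A, (∀ a ∈ S, π • a = a) → π • x ∈ F) :
    ∀ n (T : Set A), T.Finite → (T \ S).ncard ≤ n →
      MulAction.Supports (finPerm A) T x → MulAction.Supports (finPerm A) S x := by
  intro n
  induction n with
  | zero =>
    intro T hT hcard hsupp
    have hTS : T ⊆ S := by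
      have : (T \ S) = ∅ := by
        have := (Set.ncard_eq_zero (hT.diff : (T \ S).Finite)).mp (Nat.le_zero.mp hcard)
        exact this
      intro t ht
      by_contra hts
      exact absurd (Set.mem_diff_of_mem ht hts) (this ▸ Set.notMem_empty t)
    intro π hπ
    exact hsupp π (fun a ha => hπ (hTS ha))
  | succ n ih =>
    intro T hT hcard hsupp
    by_cases hTS : T ⊆ S
    · intro π hπ
      exact hsupp π (fun a ha => hπ (hTS ha))
    obtain ⟨a, haT, haS⟩ : ∃ a, a ∈ T ∧ a ∉ S := Set.not_subset.mp hTS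
    -- find fresh b' with (a b') • x = x
    have hb'x : ∃ b', b' ∉ T ∧ b' ∉ S ∧ b' ≠ a ∧ swapP a b' • x = x := by
      have hBinf : ((S ∪ T)ᶜ : Set A).Infinite := (hS.union hT).infinite_compl
      have hmaps : Set.MapsTo (fun b => swapP a b • x) ((S ∪ T)ᶜ) F := by
        intro b hb
        simp only [Set.mem_compl_iff, Set.mem_union, not_or] at hb
        refine horb _ (fun s hs => ?_)
        rw [swapP_atom]
        exact Equiv.swap_apply_of_ne_of_ne (fun h => haS (h ▸ hs)) (fun h => hb.1 (h ▸ hs))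
      obtain ⟨b, hb, b', hb', hne, heq⟩ := hBinf.exists_ne_map_eq_of_mapsTo hmaps hF
      simp only [Set.mem_compl_iff, Set.mem_union, not_or] at hb hb'
      have hab : a ≠ b := fun h => hb.2 (h ▸ haT)
      have hab' : a ≠ b' := fun h => hb'.2 (h ▸ haT)
      refine ⟨b', hb'.2, hb'.1, hab'.symm, ?_⟩
      -- (b b') • x = x since b, b' ∉ T
      have hbb'x : swapP b b' • x = x := by
        refine hsupp _ (fun t ht => ?_)
        rw [swapP_atom]
        exact Equiv.swap_apply_of_ne_of_ne (fun h => hb.2 (h ▸ ht)) (fun h => hb'.2 (h ▸ ht))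
      calc swapP a b' • x = (swapP b b' * (swapP a b' * swapP a b)) • x := by
              rw [swap_identity1 hab hab' hne]
        _ = swapP b b' • (swapP a b' • (swapP a b • x)) := by rw [mul_smul, mul_smul]
        _ = swapP b b' • (swapP a b' • (swapP a b' • x)) := by rw [heq]
        _ = swapP b b' • ((swapP a b' * swapP a b') • x) := by rw [mul_smul]
        _ = swapP b b' • x := by rw [swapP_mul_self, one_smul]
        _ = x := hbb'x
    obtain ⟨b', hb'T, hb'S, hb'a, hb'x⟩ := hb'x
    -- (a c) • x = x for any c ∉ T
    have hany : ∀ c ∉ T, swapP a c • x = x := by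
      intro c hcT
      rcases eq_or_ne c b' with rfl | hcb'
      · exact hb'x
      have hac : a ≠ c := fun h => hcT (h ▸ haT)
      have hb'cx : swapP b' c • x = x := by
        refine hsupp _ (fun t ht => ?_)
        rw [swapP_atom]
        exact Equiv.swap_apply_of_ne_of_ne (fun h => hb'T (h ▸ ht)) (fun h => hcT (h ▸ ht))
      calc swapP a c • x = (swapP b' c * swapP a b' * swapP b' c) • x := by
              rw [swap_conj hb'a.symm hac hcb'.symm]
        _ = swapP b' c • (swapP a b' • (swapP b' c • x)) := by rw [mul_smul, mul_smul]
        _ = x := by rw [hb'cx, hb'x, hb'cx]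
    -- x is supported by T \ {a}
    have hsupp' : MulAction.Supports (finPerm A) (T \ {a}) x := by
      intro π hπ
      have hmoved : ({d | (π : Equiv.Perm A) d ≠ d}).Finite := π.2
      obtain ⟨c, hc⟩ := (hT.union hmoved).infinite_compl.nonempty
      simp only [Set.mem_compl_iff, Set.mem_union, not_or, Set.mem_setOf_eq, not_not] at hc
      obtain ⟨hcT, hcπ⟩ := hc
      have hacx : swapP a c • x = x := hany c hcT
      have hca : c ≠ a := fun h => hcT (h ▸ haT)
      -- π' = (a c) π (a c) fixes all of T
      have hπ'x : (swapP a c * π * swapP a c) • x = x := by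
        refine hsupp _ (fun t ht => ?_)
        show (swapP a c * π * swapP a c : finPerm A) • t = t
        rcases eq_or_ne t a with rfl | hta
        · show Equiv.swap t c ((π : Equiv.Perm A) (Equiv.swap t c t)) = t
          rw [Equiv.swap_apply_left, hcπ, Equiv.swap_apply_right]
        · have htc : t ≠ c := fun h => hcT (h ▸ ht)
          have hπt : (π : Equiv.Perm A) t = t := hπ ⟨ht, hta⟩
          show Equiv.swap a c ((π : Equiv.Perm A) (Equiv.swap a c t)) = t
          rw [Equiv.swap_apply_of_ne_of_ne hta htc, hπt,
            Equiv.swap_apply_of_ne_of_ne hta htc]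
      have hid : swapP a c * (swapP a c * π * swapP a c) * swapP a c = π := by
        have h1 : swapP a c * (swapP a c * π * swapP a c) = π * swapP a c := by
          rw [← mul_assoc, ← mul_assoc, swapP_mul_self, one_mul]
        rw [h1, mul_assoc, swapP_mul_self, mul_one]
      calc π • x = (swapP a c * (swapP a c * π * swapP a c) * swapP a c) • x := by
              rw [hid]
        _ = swapP a c • ((swapP a c * π * swapP a c) • (swapP a c • x)) := by
              rw [mul_smul, mul_smul]
        _ = x := by rw [hacx, hπ'x, hacx]
    -- recurse
    refine ih (T \ {a}) hT.diff ?_ hsupp'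
    have h1 : (T \ {a}) \ S = (T \ S) \ {a} := by
      ext t; simp only [Set.mem_diff, Set.mem_singleton_iff]; tauto
    have h2 : ((T \ S) \ {a}).ncard < (T \ S).ncard :=
      Set.ncard_diff_singleton_lt_of_mem ⟨haT, haS⟩ (hT.diff : (T \ S).Finite)
    rw [h1]
    omega

end Aux

/-- if a finitely supported subset `X` of an invariant set contains no
infinite uniformly supported subset, then neither does its finite powerset `℘_fin(X)`. -/
theorem stmt4 {A Y : Type*} [Infinite A] [MulAction (finPerm A) Y]
    (hinv : ∀ y : Y, FinitelySupported A y) (X : Set Y)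
    (hX : FinitelySupported A X) (h : NoInfUS A X) :
    NoInfUS A (finPowerset X) := by
  rintro W hW ⟨S, hSfin, hsupp⟩
  set U : Set Y := ⋃₀ W with hU
  have hUX : U ⊆ X := by
    rintro y ⟨F, hFW, hyF⟩
    exact (hW hFW).1 hyF
  have hUsupp : ∀ y ∈ U, MulAction.Supports (finPerm A) S y := by
    rintro y ⟨F, hFW, hyF⟩
    obtain ⟨T, hTfin, hTsupp⟩ := hinv y
    refine key S hSfin F (hW hFW).2 y (fun π hπ => ?_) _ T hTfin le_rfl hTsupp
    have hFfix : π • F = F := hsupp F hFW π (fun a ha => hπ a ha)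
    rw [← hFfix]
    exact Set.smul_mem_smul_set hyF
  have hUfin : U.Finite := h U hUX ⟨S, hSfin, hUsupp⟩
  exact hUfin.finite_subsets.subset (fun F hF => Set.subset_sUnion_of_mem hF)
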